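/- Let V_t be the value-iteration iterates (V_0 ≡ 0, V_{t+1}(S) = c(S) + min{(K_0 V_t)(S), (K_1 V_t)(S)}) and define ΔV_t(S) = (K_1 V_t)(S) − (K_0 V_t)(S), with the associated optimal action a_t(S) = 1 if ΔV_t(S) < 0 and a_t(S) = 0 otherwise. Then for every t ≥ 0, every battery level e ∈ {1,...,E_max}, and every source state X ∈ {0,1}, the set {Δ ∈ {1,...,Δ_max} : a_t(e,X,Δ) = 1} is upward closed in Δ; equivalently, there exists a threshold Δ_TH (depending on t, e, X) such that transmitting is optimal if and only if Δ ≥ Δ_TH. Moreover ΔV_t(0,X,Δ) = 0 for all X, Δ, so the optimal action at an empty battery is to idle. Hence the optimal transmission policy is a threshold policy in the VIA (Theorem 1). -/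

import Mathlib

open Finset

namespace VIA

/-- The MDP state space: battery level, source state, VIA value. -/
abbrev State (Emax Dmax : ℕ) := Fin (Emax + 1) × Bool × Fin (Dmax + 1)

/-- Deterministic next state given the action `a`, energy arrival `b`,
source-flip indicator `f`, and channel-success indicator `h`. -/
def nextState (Emax Dmax : ℕ) (s : State Emax Dmax) (a b f h : Bool) :
    State Emax Dmax :=
  let act : Bool := a && decide (0 < s.1.val)
  -- a successful transmission requires transmitting and channel success
  let succ : Bool := act && h
  (⟨min (s.1.val + (if b then 1 else 0) - (if act then 1 else 0)) Emax,
      Nat.lt_succ_of_le (min_le_right _ _)⟩,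
   (if f then !s.2.1 else s.2.1),
   ⟨min (if succ then (if f then 1 else 0)
         else (if f then s.2.2.val + 1 else s.2.2.val)) Dmax,
      Nat.lt_succ_of_le (min_le_right _ _)⟩)

/-- Bernoulli weight: probability `x` for `true`, `1 - x` for `false`. -/
def bern (x : ℝ) : Bool → ℝ := fun b => if b then x else 1 - x

/-- The transition kernel `K_a(s, s')` of the MDP, for action `a`
(`a = true` means transmit).  The source flips with probability `p`
from state `0 = false` and with probability `q` from state `1 = true`;
energy arrives with probability `β`; a transmission succeeds with
probability `ps`. -/
def K (Emax Dmax : ℕ) (p q β ps : ℝ) (a : Bool) (s s' : State Emax Dmax) : ℝ :=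
  ∑ b : Bool, ∑ f : Bool, ∑ h : Bool,
    bern β b * bern (if s.2.1 then q else p) f * bern ps h *
      (if nextState Emax Dmax s a b f h = s' then 1 else 0)

/-- The per-stage cost: the VIA value. -/
def cost (Emax Dmax : ℕ) (s : State Emax Dmax) : ℝ := s.2.2.val

/-- `(K_a V)(s) = ∑_{s'} K_a(s,s') V(s')`. -/
def KV (Emax Dmax : ℕ) (p q β ps : ℝ) (a : Bool) (V : State Emax Dmax → ℝ)
    (s : State Emax Dmax) : ℝ :=
  ∑ s' : State Emax Dmax, K Emax Dmax p q β ps a s s' * V s'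

/-- Value iteration: `V_0 ≡ 0`,
`V_{t+1}(s) = c(s) + min{(K_0 V_t)(s), (K_1 V_t)(s)}`. -/
def Viter (Emax Dmax : ℕ) (p q β ps : ℝ) : ℕ → State Emax Dmax → ℝ
  | 0 => fun _ => 0
  | t + 1 => fun s =>
      cost Emax Dmax s +
        min (KV Emax Dmax p q β ps false (Viter Emax Dmax p q β ps t) s)
            (KV Emax Dmax p q β ps true (Viter Emax Dmax p q β ps t) s)

/-- `ΔV_t(s) = (K_1 V_t)(s) − (K_0 V_t)(s)`. -/
def dV (Emax Dmax : ℕ) (p q β ps : ℝ) (t : ℕ) (s : State Emax Dmax) : ℝ :=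
  KV Emax Dmax p q β ps true (Viter Emax Dmax p q β ps t) s -
    KV Emax Dmax p q β ps false (Viter Emax Dmax p q β ps t) s


section
variable (Emax Dmax : ℕ) (p q β ps : ℝ)

lemma KV_expand (a : Bool) (V : State Emax Dmax → ℝ) (s : State Emax Dmax) :
    KV Emax Dmax p q β ps a V s =
      ∑ b : Bool, ∑ f : Bool, ∑ h : Bool,
        bern β b * bern (if s.2.1 then q else p) f * bern ps h *
          V (nextState Emax Dmax s a b f h) := by
  unfold KV K
  simp only [Finset.sum_mul]
  rw [Finset.sum_comm]
  refine Finset.sum_congr rfl fun b _ => ?_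
  rw [Finset.sum_comm]
  refine Finset.sum_congr rfl fun f _ => ?_
  rw [Finset.sum_comm]
  refine Finset.sum_congr rfl fun h _ => ?_
  simp only [mul_assoc, ite_mul, one_mul, zero_mul, mul_ite, mul_one, mul_zero]
  rw [Finset.sum_ite_eq]
  simp

/-- Clamped value function. -/
def W (t : ℕ) (e : ℕ) (X : Bool) (d : ℕ) : ℝ :=
  Viter Emax Dmax p q β ps t
    (⟨min e Emax, Nat.lt_succ_of_le (min_le_right _ _)⟩, X,
     ⟨min d Dmax, Nat.lt_succ_of_le (min_le_right _ _)⟩)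

lemma W_clamp (t e X d) :
    W Emax Dmax p q β ps t e X d
      = W Emax Dmax p q β ps t (min e Emax) X (min d Dmax) := by
  unfold W
  congr 2 <;> simp [min_assoc]

/-- expectation form of `K_a V_t`, in terms of `W`. -/
def EK (t : ℕ) (a : Bool) (e : ℕ) (X : Bool) (d : ℕ) : ℝ :=
  ∑ b : Bool, ∑ f : Bool, ∑ h : Bool,
    bern β b * bern (if X then q else p) f * bern ps h *
      W Emax Dmax p q β ps t
        (e + (if b then 1 else 0) - (if a && decide (0 < e) then 1 else 0))
        (if f then !X else X)
        (if (a && decide (0 < e)) && h then (if f then 1 else 0)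
         else (if f then d + 1 else d))

lemma KV_eq_EK (t : ℕ) (a : Bool) (e : ℕ) (X : Bool) (d : ℕ)
    (he : e ≤ Emax) (hd : d ≤ Dmax) :
    KV Emax Dmax p q β ps a (Viter Emax Dmax p q β ps t)
      (⟨e, Nat.lt_succ_of_le he⟩, X, ⟨d, Nat.lt_succ_of_le hd⟩) = EK Emax Dmax p q β ps t a e X d := by
  rw [KV_expand]
  unfold EK
  refine Finset.sum_congr rfl fun b _ => Finset.sum_congr rfl fun f _ =>
    Finset.sum_congr rfl fun h _ => ?_
  congr 1

end
lemma bern_nonneg {x : ℝ} (h0 : 0 ≤ x) (h1 : x ≤ 1) (b : Bool) : 0 ≤ bern x b := by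
  cases b <;> simp [bern] <;> linarith

section
variable (Emax Dmax : ℕ) (p q β ps : ℝ)

/-- sum over arrival/flip booleans with the natural weights. -/
def SB (X : Bool) (φ : Bool → Bool → ℝ) : ℝ :=
  ∑ b : Bool, ∑ f : Bool, bern β b * bern (if X then q else p) f * φ b f

variable {p q β ps}

lemma SB_le (hp0 : 0 ≤ p) (hp1 : p ≤ 1) (hq0 : 0 ≤ q) (hq1 : q ≤ 1)
    (hβ0 : 0 ≤ β) (hβ1 : β ≤ 1) {X : Bool} {φ ψ : Bool → Bool → ℝ}
    (h : ∀ b f, φ b f ≤ ψ b f) : SB p q β X φ ≤ SB p q β X ψ := by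
  refine Finset.sum_le_sum fun b _ => Finset.sum_le_sum fun f _ => ?_
  have hw : 0 ≤ bern β b * bern (if X then q else p) f := by
    apply mul_nonneg (bern_nonneg hβ0 hβ1 b)
    cases X <;> [exact bern_nonneg hp0 hp1 f; exact bern_nonneg hq0 hq1 f]
  exact mul_le_mul_of_nonneg_left (h b f) hw

lemma SB_smul (c : ℝ) (X : Bool) (φ : Bool → Bool → ℝ) :
    c * SB p q β X φ = SB p q β X (fun b f => c * φ b f) := by
  unfold SB
  rw [Finset.mul_sum]
  refine Finset.sum_congr rfl fun b _ => ?_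
  rw [Finset.mul_sum]
  exact Finset.sum_congr rfl fun f _ => by ring

lemma SB_sub (X : Bool) (φ ψ : Bool → Bool → ℝ) :
    SB p q β X φ - SB p q β X ψ = SB p q β X (fun b f => φ b f - ψ b f) := by
  unfold SB
  rw [← Finset.sum_sub_distrib]
  refine Finset.sum_congr rfl fun b _ => ?_
  rw [← Finset.sum_sub_distrib]
  exact Finset.sum_congr rfl fun f _ => by ring

variable (p q β ps)

lemma EK_false (t e : ℕ) (X : Bool) (d : ℕ) :
    EK Emax Dmax p q β ps t false e X d =
      SB p q β X (fun b f =>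
        W Emax Dmax p q β ps t (e + (if b then 1 else 0)) (if f then !X else X)
          (if f then d + 1 else d)) := by
  unfold EK SB
  refine Finset.sum_congr rfl fun b _ => Finset.sum_congr rfl fun f _ => ?_
  rw [Fintype.sum_bool]
  cases b <;> cases f <;> cases X <;> simp [bern] <;> ring

lemma EK_true (t e : ℕ) (he : 1 ≤ e) (X : Bool) (d : ℕ) :
    EK Emax Dmax p q β ps t true e X d =
      SB p q β X (fun b f =>
        ps * W Emax Dmax p q β ps t (e + (if b then 1 else 0) - 1)
              (if f then !X else X) (if f then 1 else 0) +
        (1 - ps) * W Emax Dmax p q β ps t (e + (if b then 1 else 0) - 1)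
              (if f then !X else X) (if f then d + 1 else d)) := by
  unfold EK SB
  have hdec : decide (0 < e) = true := decide_eq_true (by omega)
  refine Finset.sum_congr rfl fun b _ => Finset.sum_congr rfl fun f _ => ?_
  rw [Fintype.sum_bool]
  cases b <;> cases f <;> cases X <;> simp [bern, hdec] <;> ring

lemma EK_zero (t : ℕ) (a : Bool) (X : Bool) (d : ℕ) :
    EK Emax Dmax p q β ps t a 0 X d = EK Emax Dmax p q β ps t false 0 X d := by
  unfold EK
  simp

end
section
variable (Emax Dmax : ℕ) (p q β ps : ℝ)

lemma W_zero (e : ℕ) (X : Bool) (d : ℕ) : W Emax Dmax p q β ps 0 e X d = 0 := rfl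

lemma W_eq_Viter (t e : ℕ) (X : Bool) (d : ℕ) (he : e ≤ Emax) (hd : d ≤ Dmax) :
    W Emax Dmax p q β ps t e X d =
      Viter Emax Dmax p q β ps t (⟨e, Nat.lt_succ_of_le he⟩, X, ⟨d, Nat.lt_succ_of_le hd⟩) := by
  unfold W
  congr 2 <;> simp [min_eq_left, he, hd]

lemma W_succ (t e : ℕ) (X : Bool) (d : ℕ) (he : e ≤ Emax) (hd : d ≤ Dmax) :
    W Emax Dmax p q β ps (t + 1) e X d =
      d + min (EK Emax Dmax p q β ps t false e X d)
              (EK Emax Dmax p q β ps t true e X d) := by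
  rw [W_eq_Viter Emax Dmax p q β ps (t+1) e X d he hd]
  show cost Emax Dmax _ + _ = _
  rw [KV_eq_EK Emax Dmax p q β ps t false e X d he hd,
      KV_eq_EK Emax Dmax p q β ps t true e X d he hd]
  simp [cost]

lemma min_cross {c A A' B B' C C' D D' : ℝ} (hc : 0 ≤ c)
    (h1 : c * (C' - C) ≤ A' - A) (h2 : c * (D' - D) ≤ A' - A)
    (h3 : c * (C' - C) ≤ B' - B) (h4 : c * (D' - D) ≤ B' - B) :
    c * (min C' D' - min C D) ≤ min A' B' - min A B := by
  rcases le_total C D with h | h <;> rcases le_total A' B' with h' | h'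
  · have e1 : min C D = C := min_eq_left h
    have e2 : min A' B' = A' := min_eq_left h'
    have l1 : c * (min C' D' - min C D) ≤ c * (C' - C) := by
      have := min_le_left C' D'
      apply mul_le_mul_of_nonneg_left _ hc; rw [e1]; linarith
    have l2 : min A B ≤ A := min_le_left A B
    linarith
  · have e1 : min C D = C := min_eq_left h
    have e2 : min A' B' = B' := min_eq_right h'
    have l1 : c * (min C' D' - min C D) ≤ c * (C' - C) := by
      have := min_le_left C' D'
      apply mul_le_mul_of_nonneg_left _ hc; rw [e1]; linarith
    have l2 : min A B ≤ B := min_le_right A B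
    linarith
  · have e1 : min C D = D := min_eq_right h
    have e2 : min A' B' = A' := min_eq_left h'
    have l1 : c * (min C' D' - min C D) ≤ c * (D' - D) := by
      have := min_le_right C' D'
      apply mul_le_mul_of_nonneg_left _ hc; rw [e1]; linarith
    have l2 : min A B ≤ A := min_le_left A B
    linarith
  · have e1 : min C D = D := min_eq_right h
    have e2 : min A' B' = B' := min_eq_right h'
    have l1 : c * (min C' D' - min C D) ≤ c * (D' - D) := by
      have := min_le_right C' D'
      apply mul_le_mul_of_nonneg_left _ hc; rw [e1]; linarith
    have l2 : min A B ≤ B := min_le_right A B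
    linarith

end
section
variable {Emax Dmax : ℕ} {p q β ps : ℝ}

lemma mono_key (hp0 : 0 ≤ p) (hp1 : p ≤ 1) (hq0 : 0 ≤ q) (hq1 : q ≤ 1)
    (hβ0 : 0 ≤ β) (hβ1 : β ≤ 1) (hps0 : 0 ≤ ps) (hps1 : ps ≤ 1) : ∀ t : ℕ,
    (∀ e (X : Bool) d d', d ≤ d' →
      W Emax Dmax p q β ps t e X d ≤ W Emax Dmax p q β ps t e X d') ∧
    (∀ m (X : Bool) d d', d ≤ d' →
      (1 - ps) * (W Emax Dmax p q β ps t m X d' - W Emax Dmax p q β ps t m X d) ≤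
        W Emax Dmax p q β ps t (m + 1) X d' - W Emax Dmax p q β ps t (m + 1) X d) := by
  have hc : (0:ℝ) ≤ 1 - ps := by linarith
  intro t
  induction t with
  | zero => simp [W_zero]
  | succ t ih =>
    obtain ⟨IH1, IH2⟩ := ih
    -- part (i)
    have A : ∀ e (X : Bool) d d', d ≤ d' →
        W Emax Dmax p q β ps (t+1) e X d ≤ W Emax Dmax p q β ps (t+1) e X d' := by
      intro e X d d' hdd
      rw [W_clamp Emax Dmax p q β ps (t+1) e X d,
          W_clamp Emax Dmax p q β ps (t+1) e X d']
      set e0 := min e Emax with he0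
      set d0 := min d Dmax with hd0
      set d0' := min d' Dmax with hd0'
      have he0E : e0 ≤ Emax := min_le_right _ _
      have hd0D : d0 ≤ Dmax := min_le_right _ _
      have hd0D' : d0' ≤ Dmax := min_le_right _ _
      have hd00 : d0 ≤ d0' := min_le_min hdd le_rfl
      rw [W_succ Emax Dmax p q β ps t e0 X d0 he0E hd0D,
          W_succ Emax Dmax p q β ps t e0 X d0' he0E hd0D']
      have hF : EK Emax Dmax p q β ps t false e0 X d0 ≤
          EK Emax Dmax p q β ps t false e0 X d0' := by
        rw [EK_false, EK_false]
        refine SB_le hp0 hp1 hq0 hq1 hβ0 hβ1 fun b f => ?_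
        exact IH1 _ _ _ _ (by cases f <;> simp <;> omega)
      have hT : EK Emax Dmax p q β ps t true e0 X d0 ≤
          EK Emax Dmax p q β ps t true e0 X d0' := by
        rcases Nat.eq_zero_or_pos e0 with h0 | h1
        · rw [h0, EK_zero Emax Dmax p q β ps t true X d0, EK_zero Emax Dmax p q β ps t true X d0', EK_false, EK_false]
          refine SB_le hp0 hp1 hq0 hq1 hβ0 hβ1 fun b f => ?_
          exact IH1 _ _ _ _ (by cases f <;> simp <;> omega)
        · rw [EK_true Emax Dmax p q β ps t e0 h1, EK_true Emax Dmax p q β ps t e0 h1]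
          refine SB_le hp0 hp1 hq0 hq1 hβ0 hβ1 fun b f => ?_
          refine add_le_add le_rfl (mul_le_mul_of_nonneg_left ?_ hc)
          exact IH1 _ _ _ _ (by cases f <;> simp <;> omega)
      exact add_le_add (Nat.cast_le.mpr hd00) (min_le_min hF hT)
    refine ⟨A, ?_⟩
    -- part (ii)
    intro m X d d' hdd
    rcases le_or_gt Emax m with hm | hm
    · -- battery saturated: both sides live at the same clamped level
      have hmm : min (m+1) Emax = min m Emax := by omega
      have key : ∀ dd, W Emax Dmax p q β ps (t+1) (m+1) X dd
          = W Emax Dmax p q β ps (t+1) m X dd := fun dd => by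
        rw [W_clamp Emax Dmax p q β ps (t+1) (m+1) X dd, hmm,
          ← W_clamp Emax Dmax p q β ps (t+1) m X dd]
      rw [key, key]
      have hD : 0 ≤ W Emax Dmax p q β ps (t+1) m X d' - W Emax Dmax p q β ps (t+1) m X d := by
        have := A m X d d' hdd; linarith
      nlinarith
    · -- m + 1 ≤ Emax : the real case
      have heE : m + 1 ≤ Emax := hm
      have hW : ∀ ee dd, ee ≤ Emax → W Emax Dmax p q β ps (t+1) ee X dd
          = W Emax Dmax p q β ps (t+1) ee X (min dd Dmax) := by
        intro ee dd h
        rw [W_clamp Emax Dmax p q β ps (t+1) ee X dd, min_eq_left h,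
            W_clamp Emax Dmax p q β ps (t+1) ee X (min dd Dmax), min_eq_left h,
            min_assoc, min_self]
      rw [hW (m+1) d heE, hW (m+1) d' heE, hW m d (by omega), hW m d' (by omega)]
      set d0 := min d Dmax with hd0
      set d0' := min d' Dmax with hd0'
      have hd0D : d0 ≤ Dmax := min_le_right _ _
      have hd0D' : d0' ≤ Dmax := min_le_right _ _
      have hd00 : d0 ≤ d0' := min_le_min hdd le_rfl
      rw [W_succ Emax Dmax p q β ps t (m+1) X d0 heE hd0D,
          W_succ Emax Dmax p q β ps t (m+1) X d0' heE hd0D',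
          W_succ Emax Dmax p q β ps t m X d0 (by omega) hd0D,
          W_succ Emax Dmax p q β ps t m X d0' (by omega) hd0D']
      -- cross inequalities
      have hFF : (1-ps) * (EK Emax Dmax p q β ps t false m X d0'
            - EK Emax Dmax p q β ps t false m X d0) ≤
          EK Emax Dmax p q β ps t false (m+1) X d0'
            - EK Emax Dmax p q β ps t false (m+1) X d0 := by
        rw [EK_false, EK_false, EK_false, EK_false, SB_sub, SB_sub, SB_smul]
        refine SB_le hp0 hp1 hq0 hq1 hβ0 hβ1 fun b f => ?_
        have hidx : m + 1 + (if b then 1 else 0) = (m + (if b then 1 else 0)) + 1 := by omega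
        rw [hidx]
        exact IH2 _ _ _ _ (by cases f <;> simp <;> omega)
      have hFT : (1-ps) * (EK Emax Dmax p q β ps t false m X d0'
            - EK Emax Dmax p q β ps t false m X d0) ≤
          EK Emax Dmax p q β ps t true (m+1) X d0'
            - EK Emax Dmax p q β ps t true (m+1) X d0 := by
        rw [EK_false, EK_false, EK_true Emax Dmax p q β ps t (m+1) (by omega),
            EK_true Emax Dmax p q β ps t (m+1) (by omega), SB_sub, SB_sub, SB_smul]
        refine SB_le hp0 hp1 hq0 hq1 hβ0 hβ1 fun b f => ?_
        have hidx : m + 1 + (if b then 1 else 0) - 1 = m + (if b then 1 else 0) := by omega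
        rw [hidx]
        exact le_of_eq (by ring)
      have hTF : (1-ps) * (EK Emax Dmax p q β ps t true m X d0'
            - EK Emax Dmax p q β ps t true m X d0) ≤
          EK Emax Dmax p q β ps t false (m+1) X d0'
            - EK Emax Dmax p q β ps t false (m+1) X d0 := by
        rcases Nat.eq_zero_or_pos m with rfl | hm1
        · rw [EK_zero Emax Dmax p q β ps t true X d0, EK_zero Emax Dmax p q β ps t true X d0']; exact hFF
        · rw [EK_true Emax Dmax p q β ps t m hm1, EK_true Emax Dmax p q β ps t m hm1,
              EK_false, EK_false, SB_sub, SB_sub, SB_smul]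
          refine SB_le hp0 hp1 hq0 hq1 hβ0 hβ1 fun b f => ?_
          have hidx : m + (if b then 1 else 0) - 1 = (m - 1) + (if b then 1 else 0) := by omega
          have hidx2 : m + 1 + (if b then 1 else 0) = ((m - 1) + (if b then 1 else 0)) + 1 + 1 := by omega
          rw [hidx, hidx2]
          have h1 := IH2 ((m-1) + (if b then 1 else 0)) (if f then !X else X)
            (if f then d0 + 1 else d0) (if f then d0' + 1 else d0')
            (by cases f <;> simp <;> omega)
          have h2 := IH2 ((m-1) + (if b then 1 else 0) + 1) (if f then !X else X)
            (if f then d0 + 1 else d0) (if f then d0' + 1 else d0')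
            (by cases f <;> simp <;> omega)
          have h3 := mul_le_mul_of_nonneg_left h1 hc
          calc (1-ps) * ((ps * W Emax Dmax p q β ps t ((m-1) + (if b then 1 else 0))
                  (if f then !X else X) (if f then 1 else 0) +
                (1-ps) * W Emax Dmax p q β ps t ((m-1) + (if b then 1 else 0))
                  (if f then !X else X) (if f then d0' + 1 else d0')) -
              (ps * W Emax Dmax p q β ps t ((m-1) + (if b then 1 else 0))
                  (if f then !X else X) (if f then 1 else 0) +
                (1-ps) * W Emax Dmax p q β ps t ((m-1) + (if b then 1 else 0))
                  (if f then !X else X) (if f then d0 + 1 else d0)))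
              = (1-ps) * ((1-ps) * (W Emax Dmax p q β ps t ((m-1) + (if b then 1 else 0))
                  (if f then !X else X) (if f then d0' + 1 else d0') -
                W Emax Dmax p q β ps t ((m-1) + (if b then 1 else 0))
                  (if f then !X else X) (if f then d0 + 1 else d0))) := by ring
            _ ≤ (1-ps) * (W Emax Dmax p q β ps t ((m-1) + (if b then 1 else 0) + 1)
                  (if f then !X else X) (if f then d0' + 1 else d0') -
                W Emax Dmax p q β ps t ((m-1) + (if b then 1 else 0) + 1)
                  (if f then !X else X) (if f then d0 + 1 else d0)) := h3
            _ ≤ _ := h2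
      have hTT : (1-ps) * (EK Emax Dmax p q β ps t true m X d0'
            - EK Emax Dmax p q β ps t true m X d0) ≤
          EK Emax Dmax p q β ps t true (m+1) X d0'
            - EK Emax Dmax p q β ps t true (m+1) X d0 := by
        rcases Nat.eq_zero_or_pos m with rfl | hm1
        · rw [EK_zero Emax Dmax p q β ps t true X d0, EK_zero Emax Dmax p q β ps t true X d0']; exact hFT
        · rw [EK_true Emax Dmax p q β ps t m hm1, EK_true Emax Dmax p q β ps t m hm1,
              EK_true Emax Dmax p q β ps t (m+1) (by omega),
              EK_true Emax Dmax p q β ps t (m+1) (by omega),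
              SB_sub, SB_sub, SB_smul]
          refine SB_le hp0 hp1 hq0 hq1 hβ0 hβ1 fun b f => ?_
          have hidx : m + (if b then 1 else 0) - 1 = (m - 1) + (if b then 1 else 0) := by omega
          have hidx2 : m + 1 + (if b then 1 else 0) - 1 = ((m - 1) + (if b then 1 else 0)) + 1 := by omega
          rw [hidx, hidx2]
          have h1 := IH2 ((m-1) + (if b then 1 else 0)) (if f then !X else X)
            (if f then d0 + 1 else d0) (if f then d0' + 1 else d0')
            (by cases f <;> simp <;> omega)
          nlinarith [h1]
      have Hmin := min_cross hc hFF hTF hFT hTT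
      have hcast : (d0:ℝ) ≤ (d0':ℝ) := Nat.cast_le.mpr hd00
      nlinarith [Hmin, hcast]

end
section
variable {Emax Dmax : ℕ} {p q β ps : ℝ}

lemma dV_eq (t e : ℕ) (X : Bool) (d : ℕ) (he : e ≤ Emax) (hd : d ≤ Dmax) :
    dV Emax Dmax p q β ps t (⟨e, Nat.lt_succ_of_le he⟩, X, ⟨d, Nat.lt_succ_of_le hd⟩) =
      EK Emax Dmax p q β ps t true e X d - EK Emax Dmax p q β ps t false e X d := by
  unfold dV
  rw [KV_eq_EK Emax Dmax p q β ps t true e X d he hd,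
      KV_eq_EK Emax Dmax p q β ps t false e X d he hd]

lemma dV_mono (hp0 : 0 ≤ p) (hp1 : p ≤ 1) (hq0 : 0 ≤ q) (hq1 : q ≤ 1)
    (hβ0 : 0 ≤ β) (hβ1 : β ≤ 1) (hps0 : 0 ≤ ps) (hps1 : ps ≤ 1)
    (t e : ℕ) (X : Bool) (d d' : ℕ) (he1 : 1 ≤ e) (he2 : e ≤ Emax)
    (hdd : d ≤ d') (hd' : d' ≤ Dmax) :
    dV Emax Dmax p q β ps t (⟨e, Nat.lt_succ_of_le he2⟩, X, ⟨d', Nat.lt_succ_of_le hd'⟩) ≤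
      dV Emax Dmax p q β ps t (⟨e, Nat.lt_succ_of_le he2⟩, X, ⟨d, Nat.lt_succ_of_le (le_trans hdd hd')⟩) := by
  have hd : d ≤ Dmax := le_trans hdd hd'
  rw [dV_eq t e X d he2 hd, dV_eq t e X d' he2 hd']
  obtain ⟨IH1, IH2⟩ := mono_key hp0 hp1 hq0 hq1 hβ0 hβ1 hps0 hps1 t
  have hc : (0:ℝ) ≤ 1 - ps := by linarith
  have key : EK Emax Dmax p q β ps t true e X d' - EK Emax Dmax p q β ps t true e X d ≤
      EK Emax Dmax p q β ps t false e X d' - EK Emax Dmax p q β ps t false e X d := by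
    rw [EK_true Emax Dmax p q β ps t e he1, EK_true Emax Dmax p q β ps t e he1,
        EK_false, EK_false, SB_sub, SB_sub]
    refine SB_le hp0 hp1 hq0 hq1 hβ0 hβ1 fun b f => ?_
    have hidx : e + (if b then 1 else 0) - 1 = (e - 1) + (if b then 1 else 0) := by omega
    have hidx2 : e + (if b then 1 else 0) = ((e - 1) + (if b then 1 else 0)) + 1 := by omega
    rw [hidx, hidx2]
    have h1 := IH2 ((e-1) + (if b then 1 else 0)) (if f then !X else X)
      (if f then d + 1 else d) (if f then d' + 1 else d')
      (by cases f <;> simp <;> omega)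
    nlinarith [h1]
  linarith

end

/-- **Theorem 1 (threshold structure of the optimal policy).**
With `a_t(S) = 1 ↔ ΔV_t(S) < 0`, for every `t`, every nonempty battery level
`1 ≤ e ≤ E_max` and source state `X`, the set of VIA values
`Δ ∈ {1,…,Δ_max}` at which transmitting is optimal is upward closed;
equivalently, there is a threshold `Δ_TH` (depending on `t, e, X`) such that
transmitting is optimal iff `Δ ≥ Δ_TH`.  Moreover `ΔV_t(0,X,Δ) = 0`, so at an
empty battery idling is optimal.  Hence the optimal transmission policy is a
threshold policy. -/
theorem optimal_policy_is_threshold (Emax Dmax : ℕ)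
    (p q β ps : ℝ) (hp0 : 0 ≤ p) (hp1 : p ≤ 1) (hq0 : 0 ≤ q) (hq1 : q ≤ 1)
    (hβ0 : 0 ≤ β) (hβ1 : β ≤ 1) (hps0 : 0 ≤ ps) (hps1 : ps ≤ 1) :
    (∀ (t : ℕ) (e : ℕ), ∀ he1 : 1 ≤ e, ∀ he2 : e ≤ Emax, ∀ X : Bool,
      (∀ d d' : ℕ, ∀ hd1 : 1 ≤ d, ∀ hdd : d ≤ d', ∀ hd' : d' ≤ Dmax,
        dV Emax Dmax p q β ps t (⟨e, by omega⟩, X, ⟨d, by omega⟩) < 0 →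
        dV Emax Dmax p q β ps t (⟨e, by omega⟩, X, ⟨d', by omega⟩) < 0) ∧
      (∃ th : ℕ, ∀ d : ℕ, ∀ hd1 : 1 ≤ d, ∀ hd : d ≤ Dmax,
        (dV Emax Dmax p q β ps t (⟨e, by omega⟩, X, ⟨d, by omega⟩) < 0 ↔
          th ≤ d))) ∧
    (∀ (t : ℕ) (X : Bool) (d : ℕ), ∀ hd : d ≤ Dmax,
      dV Emax Dmax p q β ps t (⟨0, by omega⟩, X, ⟨d, by omega⟩) = 0) := by
  constructor
  · intro t e he1 he2 X
    have mono : ∀ d d' : ℕ, ∀ _hd1 : 1 ≤ d, ∀ _hdd : d ≤ d', ∀ _hd' : d' ≤ Dmax,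
        dV Emax Dmax p q β ps t (⟨e, by omega⟩, X, ⟨d, by omega⟩) < 0 →
        dV Emax Dmax p q β ps t (⟨e, by omega⟩, X, ⟨d', by omega⟩) < 0 := by
      intro d d' hd1 hdd hd' hneg
      exact lt_of_le_of_lt
        (dV_mono hp0 hp1 hq0 hq1 hβ0 hβ1 hps0 hps1 t e X d d' he1 he2 hdd hd') hneg
    refine ⟨mono, ?_⟩
    classical
    by_cases hex : ∃ n : ℕ, 1 ≤ n ∧ n ≤ Dmax ∧
        dV Emax Dmax p q β ps t (⟨e, by omega⟩, X,
          ⟨min n Dmax, Nat.lt_succ_of_le (min_le_right _ _)⟩) < 0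
    · refine ⟨Nat.find hex, fun d hd1 hd => ?_⟩
      obtain ⟨h1, h2, h3⟩ := Nat.find_spec hex
      constructor
      · intro hneg
        refine Nat.find_le ⟨hd1, hd, ?_⟩
        simpa only [min_eq_left hd] using hneg
      · intro hle
        simp only [min_eq_left h2] at h3
        exact mono (Nat.find hex) d h1 hle hd h3
    · refine ⟨Dmax + 1, fun d hd1 hd => ?_⟩
      constructor
      · intro hneg
        exfalso
        exact hex ⟨d, hd1, hd, by simpa only [min_eq_left hd] using hneg⟩
      · intro hle; omega
  · intro t X d hd
    rw [dV_eq t 0 X d (by omega) hd, EK_zero, sub_self]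

end VIA
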